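/- For any integers n ≥ 0 and k ≥ 1, ∑_{g ∈ S_k} |Fix(g)|^n = k! · #{partitions of an n-element set into at most k nonempty blocks}, where the right-hand count is the number of set partitions (Finpartitions) of {1,…,n} having at most k blocks (equivalently, ∑_{m=0}^{k} S(n,m) with S(n,m) the Stirling numbers of the second kind). -/

import Mathlib

open Finset

open MulAction

variable {n k : ℕ}

instance (f : Fin n → Fin k) : DecidableRel ⇑(Setoid.ker f) := fun a b =>
  decidable_of_iff (f a = f b) Iff.rfl

/-- The partition of `Fin n` into fibers of `f`. -/
def fiberPart (f : Fin n → Fin k) : Finpartition (univ : Finset (Fin n)) :=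
  Finpartition.ofSetoid (Setoid.ker f)

lemma mem_part_fiberPart (f : Fin n → Fin k) (a b : Fin n) :
    b ∈ (fiberPart f).part a ↔ f a = f b :=
  Finpartition.mem_part_ofSetoid_iff_rel (s := Setoid.ker f) (a := a) (b := b)

lemma fiberPart_card_le (f : Fin n → Fin k) : (fiberPart f).parts.card ≤ k := by
  classical
  have h : (fiberPart f).parts =
      (univ.image f).image (fun v => ({b | v = f b} : Finset (Fin n))) := by
    show univ.image _ = _
    rw [Finset.image_image]
    refine Finset.image_congr fun a _ => ?_
    ext b
    simp [Setoid.ker_def]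
  calc (fiberPart f).parts.card ≤ (univ.image f).card := by rw [h]; exact card_image_le
    _ ≤ (univ : Finset (Fin k)).card := card_le_card (subset_univ _)
    _ = k := by simp

lemma part_ext (P Q : Finpartition (univ : Finset (Fin n)))
    (h : ∀ a b, b ∈ P.part a ↔ b ∈ Q.part a) : P = Q := by
  have key : ∀ (P Q : Finpartition (univ : Finset (Fin n))),
      (∀ a b, b ∈ P.part a ↔ b ∈ Q.part a) → P.parts ⊆ Q.parts := by
    intro P Q h t ht
    obtain ⟨a, ha⟩ := P.nonempty_of_mem_parts ht
    have hPa : P.part a = t := P.part_eq_of_mem ht ha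
    have : P.part a = Q.part a := Finset.ext fun b => h a b
    rw [← hPa, this]
    exact Q.part_mem.2 (mem_univ a)
  exact Finpartition.ext (subset_antisymm (key P Q h) (key Q P fun a b => (h a b).symm))

lemma fiberPart_smul (g : Equiv.Perm (Fin k)) (f : Fin n → Fin k) :
    fiberPart (g • f) = fiberPart f := by
  refine part_ext _ _ fun a b => ?_
  rw [mem_part_fiberPart, mem_part_fiberPart]
  show g (f a) = g (f b) ↔ _
  exact g.injective.eq_iff

lemma exists_smul_of_fiberPart_eq {f f' : Fin n → Fin k} (h : fiberPart f = fiberPart f') :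
    ∃ g : Equiv.Perm (Fin k), g • f = f' := by
  classical
  have hker : ∀ a b, f a = f b ↔ f' a = f' b := fun a b => by
    rw [← mem_part_fiberPart, ← mem_part_fiberPart, h]
  have key : ∀ (i : Fin n) (H : ∃ j, f j = f i), f' (Exists.choose H) = f' i := by
    intro i H
    have := H.choose_spec
    rwa [hker] at this
  have key' : ∀ (v : Fin k) (hv : ∃ j, f' j = v) (H : ∃ j, f j = f hv.choose),
      f' (Exists.choose H) = v := by
    intro v hv H
    rw [key _ H, hv.choose_spec]
  have key2 : ∀ (i : Fin n) (H : ∃ j, f' j = f' i), f (Exists.choose H) = f i := by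
    intro i H
    have := H.choose_spec
    rwa [← hker] at this
  have key2' : ∀ (v : Fin k) (hv : ∃ j, f j = v) (H : ∃ j, f' j = f' hv.choose),
      f (Exists.choose H) = v := by
    intro v hv H
    rw [key2 _ H, hv.choose_spec]
  refine ⟨Equiv.extendSubtype
    (⟨fun x => ⟨f' x.2.choose, ⟨x.2.choose, rfl⟩⟩,
      fun x => ⟨f x.2.choose, ⟨x.2.choose, rfl⟩⟩,
      fun x => Subtype.ext (key2' x.1 x.2 _),
      fun x => Subtype.ext (key' x.1 x.2 _)⟩ :
        {x // x ∈ Set.range f} ≃ {x // x ∈ Set.range f'}), funext fun i => ?_⟩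
  show Equiv.extendSubtype _ (f i) = f' i
  rw [Equiv.extendSubtype_apply_of_mem _ (f i) ⟨i, rfl⟩]
  exact key i _

lemma exists_fiberPart_eq (P : Finpartition (univ : Finset (Fin n))) (hP : P.parts.card ≤ k) :
    ∃ f : Fin n → Fin k, fiberPart f = P := by
  classical
  have hcard : Fintype.card {t // t ∈ P.parts} ≤ Fintype.card (Fin k) := by
    simpa using hP
  obtain ⟨ι⟩ := Function.Embedding.nonempty_of_card_le hcard
  refine ⟨fun a => ι ⟨P.part a, P.part_mem.2 (mem_univ a)⟩, ?_⟩
  refine part_ext _ _ fun a b => ?_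
  rw [mem_part_fiberPart]
  rw [P.mem_part_iff_part_eq_part (mem_univ b) (mem_univ a)]
  constructor
  · intro hab
    exact (congrArg Subtype.val (ι.injective hab)).symm
  · intro hba
    exact congrArg ι (Subtype.ext hba.symm)

theorem sum_fix_pow_eq_factorial_mul_partition_count (n k : ℕ) (hk : 1 ≤ k) :
    (∑ g : Equiv.Perm (Fin k), ((Finset.univ.filter fun a : Fin k => g a = a).card) ^ n)
      = k.factorial *
        Nat.card {P : Finpartition (Finset.univ : Finset (Fin n)) // P.parts.card ≤ k} := by
  classical
  have hfix : ∀ g : Equiv.Perm (Fin k),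
      Fintype.card (fixedBy (Fin n → Fin k) g)
        = ((Finset.univ.filter fun a : Fin k => g a = a).card) ^ n := by
    intro g
    have e : fixedBy (Fin n → Fin k) g ≃ (Fin n → {a : Fin k // g a = a}) :=
      ⟨fun f i => ⟨f.1 i, congrFun f.2 i⟩,
       fun h => ⟨fun i => (h i).1, funext fun i => (h i).2⟩,
       fun f => rfl, fun h => rfl⟩
    rw [Fintype.card_congr e, Fintype.card_fun, Fintype.card_fin, Fintype.card_subtype]
  have Ψlift : ∀ (f f' : Fin n → Fin k), (MulAction.orbitRel (Equiv.Perm (Fin k)) (Fin n → Fin k)) f f' →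
      (⟨fiberPart f, fiberPart_card_le f⟩ :
        {P : Finpartition (univ : Finset (Fin n)) // P.parts.card ≤ k})
        = ⟨fiberPart f', fiberPart_card_le f'⟩ := by
    intro f f' hrel
    obtain ⟨g, hg⟩ := hrel
    exact Subtype.ext (by rw [← hg]; exact fiberPart_smul g f')
  set Ψ : Quotient (MulAction.orbitRel (Equiv.Perm (Fin k)) (Fin n → Fin k)) →
      {P : Finpartition (univ : Finset (Fin n)) // P.parts.card ≤ k} :=
    Quotient.lift _ Ψlift with hΨ
  have hbij : Function.Bijective Ψ := by
    constructor
    · intro x y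
      induction x using Quotient.ind
      induction y using Quotient.ind
      rename_i f f'
      intro hxy
      have h : fiberPart f = fiberPart f' := congrArg Subtype.val hxy
      obtain ⟨g, hg⟩ := exists_smul_of_fiberPart_eq h
      exact Quotient.sound ⟨g⁻¹, by simp [← hg]⟩
    · rintro ⟨P, hP⟩
      obtain ⟨f, hf⟩ := exists_fiberPart_eq P hP
      exact ⟨Quotient.mk _ f, Subtype.ext hf⟩
  have hcard : Nat.card {P : Finpartition (univ : Finset (Fin n)) // P.parts.card ≤ k}
      = Fintype.card (Quotient (MulAction.orbitRel (Equiv.Perm (Fin k)) (Fin n → Fin k))) := by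
    rw [← Nat.card_eq_fintype_card]
    exact (Nat.card_congr (Equiv.ofBijective Ψ hbij)).symm
  calc (∑ g : Equiv.Perm (Fin k), ((Finset.univ.filter fun a : Fin k => g a = a).card) ^ n)
      = ∑ g : Equiv.Perm (Fin k), Fintype.card (fixedBy (Fin n → Fin k) g) :=
        (Finset.sum_congr rfl fun g _ => (hfix g).symm)
    _ = Fintype.card (Quotient (MulAction.orbitRel (Equiv.Perm (Fin k)) (Fin n → Fin k)))
          * Fintype.card (Equiv.Perm (Fin k)) :=
        MulAction.sum_card_fixedBy_eq_card_orbits_mul_card_group _ _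
    _ = k.factorial * Nat.card {P : Finpartition (univ : Finset (Fin n)) // P.parts.card ≤ k} := by
        rw [hcard, Fintype.card_perm, Fintype.card_fin, Nat.mul_comm]
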